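/- Let A = Ṡ S† with S = UΣVᵀ a reduced SVD of rank r, and à = Uᵀ Ṡ V Σ⁻¹. If w is an eigenvector of à with eigenvalue λ ≠ 0, then θ = Ṡ V Σ⁻¹ w (the exact DMD mode) is an eigenvector of A with the same eigenvalue λ, i.e. A θ = λ θ (provided θ ≠ 0). -/
import Mathlib

open Matrix

/-- If `w` is an eigenvector of the reduced DMD operator `Ã = Uᵀ Ṡ V Σ⁻¹` with eigenvalue
`λ ≠ 0`, then the exact DMD mode `θ = Ṡ V Σ⁻¹ w` (assumed nonzero) is an eigenvector of
`A = Ṡ S†` with the same eigenvalue. -/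
theorem exact_dmd_mode_is_eigenvector
    {n m r : ℕ}
    (S Sdot : Matrix (Fin n) (Fin m) ℝ)
    (U : Matrix (Fin n) (Fin r) ℝ) (Sig : Matrix (Fin r) (Fin r) ℝ)
    (V : Matrix (Fin m) (Fin r) ℝ)
    (hU : U.transpose * U = 1) (hV : V.transpose * V = 1)
    (hSigdiag : ∀ i j, i ≠ j → Sig i j = 0) (hSiginv : IsUnit Sig.det)
    (hS : S = U * Sig * V.transpose)
    (A : Matrix (Fin n) (Fin n) ℝ) (hA : A = Sdot * (V * Sig⁻¹ * U.transpose))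
    (lam : ℝ) (hlam : lam ≠ 0) (w : Fin r → ℝ)
    (hw : (U.transpose * Sdot * V * Sig⁻¹).mulVec w = lam • w)
    (θ : Fin n → ℝ) (hθ : θ = (Sdot * V * Sig⁻¹).mulVec w) (hθne : θ ≠ 0) :
    A.mulVec θ = lam • θ := by
  subst hA hθ
  rw [mulVec_mulVec]
  have h : Sdot * (V * Sig⁻¹ * U.transpose) * (Sdot * V * Sig⁻¹)
      = (Sdot * V * Sig⁻¹) * (U.transpose * Sdot * V * Sig⁻¹) := by
    simp only [Matrix.mul_assoc]
  rw [h, ← mulVec_mulVec, hw, mulVec_smul]
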